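/- Suppose n is even and let d ∈ K be nonzero. Then there exists a nonzero u ∈ K such that Tr(d·u^(σ+1)) = 0. -/

import Mathlib

set_option maxHeartbeats 1000000
set_option synthInstance.maxHeartbeats 400000

/-- The subfield of elements fixed by `x ↦ x ^ p ^ e`. -/
def stmt15AuxS (K : Type*) [Field K] (p e : ℕ) [ExpChar K p] : Subfield K where
  carrier := {x : K | x ^ p ^ e = x}
  mul_mem' {a b} ha hb := by
    simp only [Set.mem_setOf_eq] at ha hb ⊢; rw [mul_pow, ha, hb]
  one_mem' := one_pow _
  add_mem' {a b} ha hb := by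
    simp only [Set.mem_setOf_eq] at ha hb ⊢
    rw [add_pow_expChar_pow, ha, hb]
  zero_mem' := by
    simp only [Set.mem_setOf_eq]
    exact zero_pow (expChar_pow_pos K p e).ne'
  neg_mem' {a} ha := by
    simp only [Set.mem_setOf_eq] at ha ⊢
    have hneg : (-a) ^ p ^ e = -(a ^ p ^ e) := by
      simpa only [iterateFrobenius_def] using map_neg (iterateFrobenius K p e) a
    rw [hneg, ha]
  inv_mem' a ha := by
    simp only [Set.mem_setOf_eq] at ha ⊢
    rw [inv_pow, ha]

/-- For even `n` and nonzero `d`, there is a nonzero `u` with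
`Tr(d u^(σ+1)) = 0`. -/
theorem stmt_15 (q n s : ℕ) (hq : IsPrimePow q) (hn : 4 ≤ n) (heven : Even n)
    (hs : 0 < s) (hsn : Nat.Coprime s n) (K : Type*) [Field K] [Fintype K]
    (hK : Fintype.card K = q ^ n) (d : K) (hd : d ≠ 0) :
    ∃ u : K, u ≠ 0 ∧
      ∑ i ∈ Finset.range n, (d * u ^ (q ^ s + 1)) ^ (q ^ i) = 0 := by
  classical
  obtain ⟨p, e, hp, he, rfl⟩ := hq
  have pp : p.Prime := Nat.prime_iff.mpr hp
  have hQ1 : 1 < p ^ e := Nat.one_lt_pow he.ne' pp.one_lt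
  have hQpos : 0 < p ^ e := Nat.lt_of_lt_of_le Nat.zero_lt_one hQ1.le
  -- characteristic of `K` is `p`
  haveI hKp : CharP K p := by
    obtain ⟨m, hm, hcard⟩ := FiniteField.card K (ringChar K)
    have h1 : ringChar K ∣ p ^ (e * n) := by
      rw [pow_mul, ← hK, hcard]
      exact dvd_pow_self _ m.pos.ne'
    have h2 : ringChar K = p :=
      (Nat.prime_dvd_prime_iff_eq hm pp).mp (hm.dvd_of_dvd_pow h1)
    rw [← h2]; exact ringChar.charP K
  haveI : Fact p.Prime := ⟨pp⟩
  haveI : ExpChar K p := .prime pp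
  have hpow_eq : ∀ t : ℕ, (p ^ e) ^ t = p ^ (e * t) := fun t => (pow_mul p e t).symm
  have hfix : ∀ x : K, x ^ p ^ e = x → ∀ t, x ^ (p ^ e) ^ t = x := by
    intro x hx t
    induction t with
    | zero => simp
    | succ t ih => rw [pow_succ, pow_mul, ih, hx]
  -- the subfield of elements fixed by `x ↦ x ^ (p ^ e)`
  let S : Subfield K := stmt15AuxS K p e
  haveI : Fintype S := Fintype.ofFinite S
  have hSmem : ∀ x : K, x ∈ S ↔ x ^ p ^ e = x := fun _ => Iff.rfl
  -- `card S ≤ p ^ e`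
  have hSle : Fintype.card S ≤ p ^ e := by
    have hpoly : (Polynomial.X ^ p ^ e - Polynomial.X : Polynomial K) ≠ 0 := by
      intro h
      have h2 : (Polynomial.X ^ p ^ e : Polynomial K) = (Polynomial.X : Polynomial K) := sub_eq_zero.mp h
      have h3 := congrArg Polynomial.natDegree h2
      rw [Polynomial.natDegree_X_pow, Polynomial.natDegree_X] at h3
      omega
    have hsub : (Finset.univ.image (fun z : S => (z : K))).val ⊆
        (Polynomial.X ^ p ^ e - Polynomial.X : Polynomial K).roots := by
      intro z hz
      rw [Finset.mem_val, Finset.mem_image] at hz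
      obtain ⟨w, -, rfl⟩ := hz
      rw [Polynomial.mem_roots hpoly]
      simp only [Polynomial.IsRoot, Polynomial.eval_sub, Polynomial.eval_pow,
        Polynomial.eval_X, sub_eq_zero]
      exact w.2
    have h4 := Polynomial.card_le_degree_of_subset_roots hsub
    rw [Finset.card_image_of_injective _ Subtype.coe_injective, Finset.card_univ] at h4
    refine h4.trans ((Polynomial.natDegree_sub_le _ _).trans ?_)
    rw [Polynomial.natDegree_X_pow, Polynomial.natDegree_X]
    omega
  -- the dimension of `K` over `S` is at least `n`
  have hcardK : Fintype.card K = Fintype.card S ^ Module.finrank S K :=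
    Module.card_eq_pow_finrank
  have hmn : n ≤ Module.finrank S K := by
    have h1 : (p ^ e) ^ n ≤ (p ^ e) ^ Module.finrank S K := by
      calc (p ^ e) ^ n = Fintype.card K := hK.symm
        _ = Fintype.card S ^ Module.finrank S K := hcardK
        _ ≤ (p ^ e) ^ Module.finrank S K := Nat.pow_le_pow_left hSle _
    exact (Nat.pow_le_pow_iff_right hQ1).mp h1
  have hm2 : 2 < Module.finrank S K := lt_of_lt_of_le (by omega) hmn
  -- the trace map
  set Tr : K → K := fun z => ∑ i ∈ Finset.range n, z ^ (p ^ e) ^ i with hTrdef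
  have hTr0 : Tr 0 = 0 := by
    simp only [hTrdef]
    exact Finset.sum_eq_zero fun i _ => zero_pow (pow_ne_zero i hQpos.ne')
  have hTradd : ∀ x y, Tr (x + y) = Tr x + Tr y := by
    intro x y
    simp only [hTrdef]
    rw [← Finset.sum_add_distrib]
    refine Finset.sum_congr rfl fun i _ => ?_
    rw [hpow_eq]
    exact add_pow_expChar_pow x y p (e * i)
  let TrHom : K →+ K := { toFun := Tr, map_zero' := hTr0, map_add' := hTradd }
  have hTr_smul : ∀ c z : K, c ^ p ^ e = c → Tr (c * z) = c * Tr z := by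
    intro c z hc
    simp only [hTrdef, Finset.mul_sum]
    refine Finset.sum_congr rfl fun i _ => ?_
    rw [mul_pow, hfix c hc i]
  have hpowcard : ∀ z : K, z ^ (p ^ e) ^ n = z := by
    intro z; rw [← hK]; exact FiniteField.pow_card z
  have hTrS : ∀ z : K, Tr z ∈ S := by
    intro z
    rw [hSmem]
    simp only [hTrdef]
    rw [sum_pow_char_pow]
    have hstep : ∀ i : ℕ, (z ^ (p ^ e) ^ i) ^ p ^ e = z ^ (p ^ e) ^ (i + 1) := by
      intro i; rw [← pow_mul, ← pow_succ]
    rw [Finset.sum_congr rfl fun i _ => hstep i]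
    have h1 := Finset.sum_range_succ (fun i => z ^ (p ^ e) ^ i) n
    have h2 := Finset.sum_range_succ' (fun i => z ^ (p ^ e) ^ i) n
    rw [hpowcard] at h1
    have h3 := h1.symm.trans h2
    simp only [pow_zero, pow_one] at h3
    exact (add_right_cancel h3).symm
  -- the quadratic form as a multivariate polynomial over `S`
  let b := Module.finBasis S K
  let A : Fin (Module.finrank S K) → Fin (Module.finrank S K) → S :=
    fun j k => ⟨Tr (d * (b j) ^ (p ^ e) ^ s * b k), hTrS _⟩
  let P : MvPolynomial (Fin (Module.finrank S K)) S :=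
    ∑ j : Fin (Module.finrank S K), ∑ k : Fin (Module.finrank S K),
      MvPolynomial.C (A j k) * MvPolynomial.X j * MvPolynomial.X k
  have hdeg : P.totalDegree < Fintype.card (Fin (Module.finrank S K)) := by
    rw [Fintype.card_fin]
    refine lt_of_le_of_lt ?_ hm2
    refine (MvPolynomial.totalDegree_finset_sum _ _).trans (Finset.sup_le fun j _ => ?_)
    refine (MvPolynomial.totalDegree_finset_sum _ _).trans (Finset.sup_le fun k _ => ?_)
    calc (MvPolynomial.C (A j k) * MvPolynomial.X j * MvPolynomial.X k).totalDegree
        ≤ (MvPolynomial.C (A j k) * MvPolynomial.X j).totalDegree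
            + (MvPolynomial.X k).totalDegree := MvPolynomial.totalDegree_mul _ _
      _ ≤ ((MvPolynomial.C (A j k)).totalDegree + (MvPolynomial.X j).totalDegree)
            + (MvPolynomial.X k).totalDegree :=
          Nat.add_le_add_right (MvPolynomial.totalDegree_mul _ _) _
      _ ≤ 2 := by
          rw [MvPolynomial.totalDegree_C, MvPolynomial.totalDegree_X,
            MvPolynomial.totalDegree_X]
  have h0sol : MvPolynomial.eval (0 : Fin (Module.finrank S K) → S) P = 0 := by
    simp [P, map_sum]
  -- Chevalley–Warning
  have hdvd := char_dvd_card_solutions p hdeg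
  have hlt : 1 < Fintype.card {x : Fin (Module.finrank S K) → S // MvPolynomial.eval x P = 0} := by
    have hpos : 0 < Fintype.card
        {x : Fin (Module.finrank S K) → S // MvPolynomial.eval x P = 0} :=
      Fintype.card_pos_iff.mpr ⟨⟨0, h0sol⟩⟩
    exact lt_of_lt_of_le pp.one_lt (Nat.le_of_dvd hpos hdvd)
  obtain ⟨⟨x, hxP⟩, hy⟩ := Fintype.exists_ne_of_one_lt_card hlt ⟨0, h0sol⟩
  have hx0 : x ≠ 0 := fun h => hy (Subtype.ext h)
  refine ⟨b.equivFun.symm x, ?_, ?_⟩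
  · intro h
    exact hx0 (b.equivFun.symm.injective (h.trans (map_zero b.equivFun.symm.toLinearMap).symm))
  · set u : K := b.equivFun.symm x with hu
    have hurep : u = ∑ j, (x j : K) * b j := by
      rw [hu, Module.Basis.equivFun_symm_apply]
      exact Finset.sum_congr rfl fun j _ => Subfield.smul_def _ _
    have husigma : u ^ (p ^ e) ^ s = ∑ j, (x j : K) * (b j) ^ (p ^ e) ^ s := by
      rw [hurep, hpow_eq, sum_pow_char_pow]
      refine Finset.sum_congr rfl fun j _ => ?_
      rw [← hpow_eq, mul_pow, hfix ((x j : K)) (x j).2 s]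
    have hexpand : d * u ^ ((p ^ e) ^ s + 1) =
        ∑ j, ∑ k, ((x j : K) * (x k : K)) * (d * (b j) ^ (p ^ e) ^ s * b k) := by
      rw [pow_add, pow_one, husigma]
      nth_rewrite 1 [hurep]
      rw [Finset.sum_mul_sum, Finset.mul_sum]
      refine Finset.sum_congr rfl fun j _ => ?_
      rw [Finset.mul_sum]
      refine Finset.sum_congr rfl fun k _ => ?_
      ring
    have hRHS : ((MvPolynomial.eval x P : S) : K) =
        ∑ j, ∑ k, ((x j : K) * (x k : K)) * Tr (d * (b j) ^ (p ^ e) ^ s * b k) := by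
      have hev : MvPolynomial.eval x P = ∑ j, ∑ k, A j k * x j * x k := by
        simp [P, map_sum]
      rw [hev]
      push_cast
      refine Finset.sum_congr rfl fun j _ => Finset.sum_congr rfl fun k _ => ?_
      show ((A j k : K)) * (x j : K) * (x k : K) = _
      ring
    have hTreval : Tr (d * u ^ ((p ^ e) ^ s + 1)) = ((MvPolynomial.eval x P : S) : K) := by
      rw [hexpand, hRHS]
      rw [show Tr = ⇑TrHom from rfl, map_sum]
      refine Finset.sum_congr rfl fun j _ => ?_
      rw [map_sum]
      refine Finset.sum_congr rfl fun k _ => ?_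
      show Tr _ = _
      refine hTr_smul _ _ ?_
      exact mul_mem (x j).2 (x k).2
    show Tr (d * u ^ ((p ^ e) ^ s + 1)) = 0
    rw [hTreval, hxP]
    simp
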